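/- Let σ > 0, t₁, t₂ > 0, μ ∈ ℝ, and K, K' > 0. Then ∫_ℝ 1_{z ≥ log K} · [∫_ℝ (−μ) ∂_y[(2πσ²t₂)^{−1/2} exp(−(z−y)²/(2σ²t₂))] · max(e^y − K', 0) dy] · (2πσ²t₁)^{−1/2} exp(−(z − (log K + μt₁))²/(2σ²t₁)) dz = μ K e^{μt₁ + σ²(t₁+t₂)/2} · ∫_0^∞ 𝒩((log(K/K') + u + σ²t₂)/(σ√t₂)) · (2πσ²t₁)^{−1/2} exp(−(u − (μ + σ²)t₁)²/(2σ²t₁)) du. -/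

import Mathlib

open MeasureTheory Real Set Filter

/-- The standard normal cumulative distribution function. -/
noncomputable def stdNormalCdf (x : ℝ) : ℝ :=
  ∫ u in Set.Iio x, (Real.sqrt (2 * Real.pi))⁻¹ * Real.exp (-u ^ 2 / 2)

/-- The Gaussian kernel `p_σ(t,x,y) := (2πσ²t)^{−1/2} exp(−(x−y)²/(2σ²t))`. -/
noncomputable def gaussKer (σ t x y : ℝ) : ℝ :=
  (Real.sqrt (2 * Real.pi * σ ^ 2 * t))⁻¹ * Real.exp (-(x - y) ^ 2 / (2 * σ ^ 2 * t))

noncomputable def G (v c y : ℝ) : ℝ :=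
  (Real.sqrt (2 * Real.pi * v))⁻¹ * Real.exp (-(c - y) ^ 2 / (2 * v))

lemma gaussKer_eq (σ t c y : ℝ) : gaussKer σ t c y = G (σ ^ 2 * t) c y := by
  unfold gaussKer G; ring_nf

lemma G_hasDerivAt (v c : ℝ) (hv : 0 < v) (y : ℝ) :
    HasDerivAt (fun y => G v c y) (G v c y * ((c - y) / v)) y := by
  have h0 : HasDerivAt (fun y : ℝ => c - y) (-1) y := (hasDerivAt_id y).const_sub c
  have h1 : HasDerivAt (fun y : ℝ => -(c - y) ^ 2 / (2 * v)) ((c - y) / v) y := by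
    have h2 := (h0.pow 2).neg.div_const (2 * v)
    refine h2.congr_deriv ?_
    field_simp
    ring
  have h3 := (h1.exp).const_mul ((Real.sqrt (2 * Real.pi * v))⁻¹)
  refine h3.congr_deriv ?_
  simp only [G]; ring

lemma G_tilt (v c y : ℝ) (hv : 0 < v) :
    G v c y * Real.exp y = Real.exp (c + v / 2) * G v (c + v) y := by
  have hv' : v ≠ 0 := hv.ne'
  have h : Real.exp (-(c - y) ^ 2 / (2 * v)) * Real.exp y
      = Real.exp (c + v / 2) * Real.exp (-(c + v - y) ^ 2 / (2 * v)) := by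
    rw [← Real.exp_add, ← Real.exp_add]
    congr 1
    field_simp
    ring
  unfold G
  rw [mul_assoc, h]
  ring

lemma G_integrable (v c : ℝ) (hv : 0 < v) : Integrable (fun y => G v c y) := by
  have hb : 0 < (2 * v)⁻¹ := by positivity
  have heq : (fun y => G v c y)
      = fun y => (Real.sqrt (2 * Real.pi * v))⁻¹ * Real.exp (-(2 * v)⁻¹ * (y - c) ^ 2) := by
    funext y; unfold G; congr 1; ring
  rw [heq]
  exact ((integrable_exp_neg_mul_sq hb).comp_sub_right c).const_mul _

lemma G_lin_integrable (v c b : ℝ) (hv : 0 < v) :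
    Integrable (fun y => (b - y) * G v c y) := by
  have hb : 0 < (2 * v)⁻¹ := by positivity
  have h1 : Integrable (fun y => (Real.sqrt (2 * Real.pi * v))⁻¹ *
      (-((y - c) * Real.exp (-(2 * v)⁻¹ * (y - c) ^ 2)))) :=
    (((integrable_mul_exp_neg_mul_sq hb).comp_sub_right c).neg).const_mul _
  have h2 := (G_integrable v c hv).const_mul (b - c)
  refine (h2.add h1).congr (Filter.Eventually.of_forall fun y => ?_)
  simp only [Pi.add_apply, G]
  rw [show -(2 * v)⁻¹ * (y - c) ^ 2 = -(c - y) ^ 2 / (2 * v) by ring]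
  ring

lemma G_tendsto_zero (v c : ℝ) (hv : 0 < v) :
    Tendsto (fun y => G v c y) atTop (nhds 0) := by
  have h0 : Tendsto (fun y : ℝ => y - c) atTop atTop :=
    tendsto_atTop_add_const_right _ _ tendsto_id
  have h2 : Tendsto (fun y : ℝ => (y - c) ^ 2) atTop atTop := by
    have := h0.atTop_mul_atTop₀ h0
    simpa [pow_two] using this
  have h3 : Tendsto (fun y : ℝ => (y - c) ^ 2 / (2 * v)) atTop atTop :=
    h2.atTop_div_const (by positivity)
  have h4 : Tendsto (fun y : ℝ => -(c - y) ^ 2 / (2 * v)) atTop atBot := by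
    have := tendsto_neg_atTop_atBot.comp h3
    refine this.congr fun y => ?_
    simp [Function.comp]
    ring
  have h5 := (Real.tendsto_exp_atBot).comp h4
  have h6 := h5.const_mul ((Real.sqrt (2 * Real.pi * v))⁻¹)
  simpa [G, Function.comp] using h6

lemma G_integral_Ioi (v c a : ℝ) (hv : 0 < v) :
    ∫ y in Set.Ioi a, G v c y = stdNormalCdf ((c - a) / Real.sqrt v) := by
  have hs : 0 < Real.sqrt v := Real.sqrt_pos.mpr hv
  set x0 := (c - a) / Real.sqrt v with hx0
  have himg : (fun u : ℝ => c - Real.sqrt v * u) '' Set.Iio x0 = Set.Ioi a := by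
    ext y
    simp only [Set.mem_image, Set.mem_Iio, Set.mem_Ioi]
    constructor
    · rintro ⟨u, hu, rfl⟩
      have := (lt_div_iff₀ hs).mp hu
      nlinarith
    · intro hy
      refine ⟨(c - y) / Real.sqrt v, ?_, ?_⟩
      · rw [hx0, div_lt_div_iff₀ hs hs]
        nlinarith
      · field_simp; ring
  have hderiv : ∀ u ∈ Set.Iio x0,
      HasDerivWithinAt (fun u : ℝ => c - Real.sqrt v * u) (-Real.sqrt v) (Set.Iio x0) u := by
    intro u _
    have := (((hasDerivAt_id u).const_mul (Real.sqrt v)).const_sub c).hasDerivWithinAt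
      (s := Set.Iio x0)
    simpa using this
  have hinj : Set.InjOn (fun u : ℝ => c - Real.sqrt v * u) (Set.Iio x0) := by
    intro u₁ _ u₂ _ h
    simp only at h
    have : Real.sqrt v * u₁ = Real.sqrt v * u₂ := by linarith
    exact mul_left_cancel₀ hs.ne' this
  rw [← himg, integral_image_eq_integral_abs_deriv_smul measurableSet_Iio hderiv hinj
      (fun y => G v c y)]
  rw [stdNormalCdf]
  refine setIntegral_congr_fun measurableSet_Iio fun u _ => ?_
  simp only [G, smul_eq_mul, abs_neg, abs_of_pos hs]
  rw [show c - (c - Real.sqrt v * u) = Real.sqrt v * u by ring, mul_pow,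
    Real.sq_sqrt hv.le,
    show 2 * Real.pi * v = (2 * Real.pi) * v from rfl,
    Real.sqrt_mul (by positivity : (0:ℝ) ≤ 2 * Real.pi)]
  rw [show -(v * u ^ 2) / (2 * v) = -u ^ 2 / 2 by field_simp]
  rw [mul_inv]
  field_simp

lemma inner_eq (v : ℝ) (hv : 0 < v) (μ K' z : ℝ) (hK' : 0 < K') :
    (∫ y : ℝ, (-μ) * (G v z y * ((z - y) / v)) * max (Real.exp y - K') 0)
      = μ * Real.exp (z + v / 2) * stdNormalCdf ((z + v - Real.log K') / Real.sqrt v) := by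
  set L := Real.log K' with hL
  have hK'exp : Real.exp L = K' := Real.exp_log hK'
  -- restrict to Ioi L
  have hzero : ∀ y ∉ Set.Ioi L, (-μ) * (G v z y * ((z - y) / v)) * max (Real.exp y - K') 0 = 0 := by
    intro y hy
    have : Real.exp y ≤ K' := by
      rw [← hK'exp]
      exact Real.exp_le_exp.mpr (not_lt.mp hy)
    rw [max_eq_right (by linarith), mul_zero]
  rw [← setIntegral_eq_integral_of_forall_compl_eq_zero hzero]
  rw [setIntegral_congr_fun measurableSet_Ioi
      (g := fun y => (-μ) * (G v z y * ((z - y) / v) * (Real.exp y - K')))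
      (fun y hy => by
        have : K' ≤ Real.exp y := by
          rw [← hK'exp]; exact (Real.exp_le_exp.mpr (le_of_lt hy))
        rw [max_eq_left (by linarith)]; ring)]
  -- integrabilities
  have int1 : Integrable (fun y => G v z y * Real.exp y) := by
    have heq : (fun y => G v z y * Real.exp y)
        = fun y => Real.exp (z + v / 2) * G v (z + v) y :=
      funext fun y => G_tilt v z y hv
    rw [heq]
    exact (G_integrable v (z + v) hv).const_mul _
  have int2 : Integrable (fun y => G v z y * ((z - y) / v) * (Real.exp y - K')) := by
    have e1 := (G_lin_integrable v (z + v) z hv).const_mul (Real.exp (z + v / 2) / v)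
    have e2 := (G_lin_integrable v z z hv).const_mul (K' / v)
    refine (e1.sub e2).congr (Filter.Eventually.of_forall fun y => ?_)
    have ht := G_tilt v z y hv
    simp only [Pi.sub_apply]
    linear_combination (-(z - y) / v) * ht
  -- tendsto
  have htend : Tendsto (fun y => G v z y * (Real.exp y - K')) atTop (nhds 0) := by
    have heq : (fun y => G v z y * (Real.exp y - K'))
        = fun y => Real.exp (z + v / 2) * G v (z + v) y - K' * G v z y :=
      funext fun y => by have := G_tilt v z y hv; linear_combination this
    rw [heq]
    have h1 := (G_tendsto_zero v (z + v) hv).const_mul (Real.exp (z + v / 2))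
    have h2 := (G_tendsto_zero v z hv).const_mul K'
    simpa using h1.sub h2
  -- IBP
  have hF : ∀ y ∈ Set.Ici L, HasDerivAt (fun y => G v z y * (Real.exp y - K'))
      (G v z y * ((z - y) / v) * (Real.exp y - K') + G v z y * Real.exp y) y := by
    intro y _
    exact (G_hasDerivAt v z hv y).mul ((Real.hasDerivAt_exp y).sub_const K')
  have key := integral_Ioi_of_hasDerivAt_of_tendsto' hF
    ((int2.add int1).integrableOn) htend
  rw [integral_add int2.integrableOn int1.integrableOn] at key
  have hFL : G v z L * (Real.exp L - K') = 0 := by rw [hK'exp]; ring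
  rw [hFL, zero_sub, neg_zero] at key
  -- compute ∫ G e^y over Ioi L
  have hGe : ∫ y in Set.Ioi L, G v z y * Real.exp y
      = Real.exp (z + v / 2) * stdNormalCdf ((z + v - L) / Real.sqrt v) := by
    rw [setIntegral_congr_fun measurableSet_Ioi
        (g := fun y => Real.exp (z + v / 2) * G v (z + v) y)
        (fun y _ => G_tilt v z y hv)]
    rw [MeasureTheory.integral_const_mul, G_integral_Ioi v (z + v) L hv]
  have hsplit : ∫ y in Set.Ioi L, G v z y * ((z - y) / v) * (Real.exp y - K')
      = - (Real.exp (z + v / 2) * stdNormalCdf ((z + v - L) / Real.sqrt v)) := by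
    rw [← hGe]; linarith
  rw [setIntegral_congr_fun measurableSet_Ioi
      (g := fun y => (-μ) * (G v z y * ((z - y) / v) * (Real.exp y - K'))) (fun y _ => rfl)]
  rw [MeasureTheory.integral_const_mul, hsplit]
  ring

/-- Building block of the second order hedging error: for `σ, t₁, t₂ > 0`,
`μ ∈ ℝ`, `K, K' > 0`,
`∫ 1_{z ≥ log K} [∫ (−μ) ∂_y[p_σ(t₂,z,y)] max(e^y − K',0) dy]
    (2πσ²t₁)^{−1/2} e^{−(z−(log K+μt₁))²/(2σ²t₁)} dz
  = μ K e^{μt₁+σ²(t₁+t₂)/2} ∫_0^∞ 𝒩((log(K/K') + u + σ²t₂)/(σ√t₂))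
    (2πσ²t₁)^{−1/2} e^{−(u−(μ+σ²)t₁)²/(2σ²t₁)} du`. -/
theorem stmt_18 (σ t₁ t₂ μ K K' : ℝ) (hσ : 0 < σ) (ht₁ : 0 < t₁) (ht₂ : 0 < t₂)
    (hK : 0 < K) (hK' : 0 < K') :
    (∫ z in Set.Ici (Real.log K),
        (∫ y : ℝ, (-μ) * deriv (fun y' => gaussKer σ t₂ z y') y * max (Real.exp y - K') 0)
          * ((Real.sqrt (2 * Real.pi * σ ^ 2 * t₁))⁻¹
            * Real.exp (-(z - (Real.log K + μ * t₁)) ^ 2 / (2 * σ ^ 2 * t₁))))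
      = μ * K * Real.exp (μ * t₁ + σ ^ 2 * (t₁ + t₂) / 2)
          * ∫ u in Set.Ioi (0:ℝ),
              stdNormalCdf ((Real.log (K / K') + u + σ ^ 2 * t₂) / (σ * Real.sqrt t₂))
                * ((Real.sqrt (2 * Real.pi * σ ^ 2 * t₁))⁻¹
                  * Real.exp (-(u - (μ + σ ^ 2) * t₁) ^ 2 / (2 * σ ^ 2 * t₁))) := by
  have hv₁ : 0 < σ ^ 2 * t₁ := by positivity
  have hv₂ : 0 < σ ^ 2 * t₂ := by positivity
  have hd : ∀ z : ℝ, deriv (fun y' => gaussKer σ t₂ z y')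
      = fun y => G (σ ^ 2 * t₂) z y * ((z - y) / (σ ^ 2 * t₂)) := by
    intro z
    funext y'
    have he : (fun y' => gaussKer σ t₂ z y') = fun y' => G (σ ^ 2 * t₂) z y' :=
      funext fun y'' => gaussKer_eq σ t₂ z y''
    rw [he, (G_hasDerivAt (σ ^ 2 * t₂) z hv₂ y').deriv]
  have hker : ∀ u m : ℝ, (Real.sqrt (2 * Real.pi * σ ^ 2 * t₁))⁻¹
      * Real.exp (-(u - m) ^ 2 / (2 * σ ^ 2 * t₁)) = G (σ ^ 2 * t₁) m u := by
    intro u m; unfold G; ring_nf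
  have hsqrt : Real.sqrt (σ ^ 2 * t₂) = σ * Real.sqrt t₂ := by
    rw [Real.sqrt_mul (sq_nonneg σ), Real.sqrt_sq hσ.le]
  have hinner : ∀ z : ℝ, (∫ y : ℝ, (-μ) * deriv (fun y' => gaussKer σ t₂ z y') y
      * max (Real.exp y - K') 0)
      = μ * Real.exp (z + σ ^ 2 * t₂ / 2)
        * stdNormalCdf ((z + σ ^ 2 * t₂ - Real.log K') / Real.sqrt (σ ^ 2 * t₂)) := by
    intro z
    simp only [hd z]
    exact inner_eq (σ ^ 2 * t₂) hv₂ μ K' z hK'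
  rw [MeasureTheory.integral_Ici_eq_integral_Ioi]
  rw [setIntegral_congr_fun (μ := volume) measurableSet_Ioi
      (g := fun z => μ * Real.exp (z + σ ^ 2 * t₂ / 2)
        * stdNormalCdf ((z + σ ^ 2 * t₂ - Real.log K') / Real.sqrt (σ ^ 2 * t₂))
        * G (σ ^ 2 * t₁) (Real.log K + μ * t₁) z)
      (fun z _ => by rw [hinner z, hker z (Real.log K + μ * t₁)])]
  have himg : (fun u : ℝ => Real.log K + u) '' Set.Ioi (0:ℝ) = Set.Ioi (Real.log K) := by
    rw [Set.image_const_add_Ioi, add_zero]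
  rw [← himg, integral_image_eq_integral_abs_deriv_smul (f' := fun _ => (1:ℝ))
      measurableSet_Ioi
      (fun u _ => by
        simpa using ((hasDerivAt_id u).const_add (Real.log K)).hasDerivWithinAt
          (s := Set.Ioi (0:ℝ)))
      (fun a _ b _ h => by simpa using h)
      (fun z => μ * Real.exp (z + σ ^ 2 * t₂ / 2)
        * stdNormalCdf ((z + σ ^ 2 * t₂ - Real.log K') / Real.sqrt (σ ^ 2 * t₂))
        * G (σ ^ 2 * t₁) (Real.log K + μ * t₁) z)]
  rw [← MeasureTheory.integral_const_mul]
  refine setIntegral_congr_fun measurableSet_Ioi fun u _ => ?_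
  simp only [smul_eq_mul, abs_one, one_mul]
  rw [show Real.log K + u + σ ^ 2 * t₂ - Real.log K'
      = Real.log (K / K') + u + σ ^ 2 * t₂ by rw [Real.log_div hK.ne' hK'.ne']; ring]
  rw [hsqrt, hker u ((μ + σ ^ 2) * t₁)]
  have hexp : Real.exp (Real.log K + u + σ ^ 2 * t₂ / 2)
      * G (σ ^ 2 * t₁) (Real.log K + μ * t₁) (Real.log K + u)
      = K * Real.exp (μ * t₁ + σ ^ 2 * (t₁ + t₂) / 2)
        * G (σ ^ 2 * t₁) ((μ + σ ^ 2) * t₁) u := by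
    unfold G
    have h2 : Real.exp (Real.log K + u + σ ^ 2 * t₂ / 2)
        * Real.exp (-(Real.log K + μ * t₁ - (Real.log K + u)) ^ 2 / (2 * (σ ^ 2 * t₁)))
        = K * Real.exp (μ * t₁ + σ ^ 2 * (t₁ + t₂) / 2)
          * Real.exp (-((μ + σ ^ 2) * t₁ - u) ^ 2 / (2 * (σ ^ 2 * t₁))) := by
      conv_rhs => rw [← Real.exp_log hK]
      rw [← Real.exp_add, ← Real.exp_add, ← Real.exp_add]
      congr 1
      have hσ' : σ ≠ 0 := hσ.ne'
      have ht₁' : t₁ ≠ 0 := ht₁.ne'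
      field_simp
      ring
    calc Real.exp (Real.log K + u + σ ^ 2 * t₂ / 2)
        * ((Real.sqrt (2 * Real.pi * (σ ^ 2 * t₁)))⁻¹
          * Real.exp (-(Real.log K + μ * t₁ - (Real.log K + u)) ^ 2 / (2 * (σ ^ 2 * t₁))))
        = (Real.sqrt (2 * Real.pi * (σ ^ 2 * t₁)))⁻¹
          * (Real.exp (Real.log K + u + σ ^ 2 * t₂ / 2)
            * Real.exp (-(Real.log K + μ * t₁ - (Real.log K + u)) ^ 2
              / (2 * (σ ^ 2 * t₁)))) := by ring
      _ = (Real.sqrt (2 * Real.pi * (σ ^ 2 * t₁)))⁻¹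
          * (K * Real.exp (μ * t₁ + σ ^ 2 * (t₁ + t₂) / 2)
            * Real.exp (-((μ + σ ^ 2) * t₁ - u) ^ 2 / (2 * (σ ^ 2 * t₁)))) := by rw [h2]
      _ = K * Real.exp (μ * t₁ + σ ^ 2 * (t₁ + t₂) / 2)
          * ((Real.sqrt (2 * Real.pi * (σ ^ 2 * t₁)))⁻¹
            * Real.exp (-((μ + σ ^ 2) * t₁ - u) ^ 2 / (2 * (σ ^ 2 * t₁)))) := by ring
  linear_combination (μ * stdNormalCdf ((Real.log (K / K') + u + σ ^ 2 * t₂)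
      / (σ * Real.sqrt t₂))) * hexp
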